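/- Let Θ be an element of a group G with Θ^k = id, and suppose G is a group of formal power series self-maps of ℂⁿ closed under taking linear parts and such that the set of its elements tangent to the identity is closed under convex combinations. Then with T the linear part of Θ, the element H = (1/k)(id + T⁻¹Θ + T⁻²Θ² + ⋯ + T^(1-k)Θ^(k-1)) satisfies T⁻¹HΘ = H, i.e. H conjugates T to Θ. -/

import Mathlib

noncomputable section

def compP (f g : PowerSeries ℂ) : PowerSeries ℂ :=
  PowerSeries.mk fun n =>
    ∑ j ∈ Finset.range (n + 1), PowerSeries.coeff j f * PowerSeries.coeff n (g ^ j)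

def iterP (g : PowerSeries ℂ) : ℕ → PowerSeries ℂ
  | 0 => PowerSeries.X
  | m + 1 => compP g (iterP g m)

abbrev FormalMap (n : ℕ) := Fin n → MvPowerSeries (Fin n) ℂ

def degreeOf {n : ℕ} (d : Fin n →₀ ℕ) : ℕ := d.sum fun _ m => m

def substM {n : ℕ} (G : FormalMap n) (f : MvPowerSeries (Fin n) ℂ) :
    MvPowerSeries (Fin n) ℂ :=
  fun d =>
    ∑ e ∈ Finset.Iic (Finsupp.equivFunOnFinite.symm fun _ => degreeOf d),
      MvPowerSeries.coeff e f * MvPowerSeries.coeff d (∏ i, G i ^ e i)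

def compM {n : ℕ} (F G : FormalMap n) : FormalMap n := fun i => substM G (F i)

def idM (n : ℕ) : FormalMap n := fun i => MvPowerSeries.X i

def iterM {n : ℕ} (F : FormalMap n) : ℕ → FormalMap n
  | 0 => idM n
  | m + 1 => compM F (iterM F m)

def linMatrix {n : ℕ} (F : FormalMap n) : Matrix (Fin n) (Fin n) ℂ :=
  fun i j => MvPowerSeries.coeff (Finsupp.single j 1) (F i)

def linMap {n : ℕ} (F : FormalMap n) : FormalMap n :=
  fun i => ∑ j, MvPowerSeries.C (linMatrix F i j) * MvPowerSeries.X j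

def substPM (q : MvPowerSeries (Fin 2) ℂ) (φ : PowerSeries ℂ) : MvPowerSeries (Fin 2) ℂ :=
  fun d =>
    ∑ j ∈ Finset.range (degreeOf d + 1),
      PowerSeries.coeff j φ * MvPowerSeries.coeff d (q ^ j)

def pXY : MvPowerSeries (Fin 2) ℂ := MvPowerSeries.X 0 * MvPowerSeries.X 1

def Mmap (φ ψ : PowerSeries ℂ) : FormalMap 2 :=
  ![MvPowerSeries.X 0 * substPM pXY φ, MvPowerSeries.X 1 * substPM pXY ψ]

namespace Aux

open MvPowerSeries Finset

variable {n : ℕ}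

lemma deg_eq_sum (e : Fin n →₀ ℕ) : degreeOf e = ∑ i, e i := by
  rw [degreeOf, Finsupp.sum_fintype]; intro; rfl

lemma deg_add (a b : Fin n →₀ ℕ) : degreeOf (a + b) = degreeOf a + degreeOf b := by
  simp [deg_eq_sum, Finset.sum_add_distrib]

lemma deg_zero : degreeOf (0 : Fin n →₀ ℕ) = 0 := by simp [deg_eq_sum]

lemma deg_eq_zero {e : Fin n →₀ ℕ} (h : degreeOf e = 0) : e = 0 := by
  rw [deg_eq_sum, Finset.sum_eq_zero_iff] at h
  ext i; exact h i (Finset.mem_univ i)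

lemma apply_le_deg (e : Fin n →₀ ℕ) (i : Fin n) : e i ≤ degreeOf e := by
  rw [deg_eq_sum]; exact Finset.single_le_sum (fun _ _ => Nat.zero_le _) (Finset.mem_univ i)

lemma deg_single (j : Fin n) (m : ℕ) : degreeOf (Finsupp.single j m) = m := by
  rw [degreeOf, Finsupp.sum_single_index]; rfl

/-- order ≥ m -/
def OG (f : MvPowerSeries (Fin n) ℂ) (m : ℕ) : Prop :=
  ∀ d : Fin n →₀ ℕ, degreeOf d < m → coeff d f = 0

lemma OG_mul {f g : MvPowerSeries (Fin n) ℂ} {a b : ℕ} (hf : OG f a) (hg : OG g b) :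
    OG (f * g) (a + b) := by
  intro d hd
  rw [coeff_mul]
  refine Finset.sum_eq_zero fun p hp => ?_
  rw [Finset.HasAntidiagonal.mem_antidiagonal] at hp
  have : degreeOf p.1 + degreeOf p.2 < a + b := by rw [← deg_add, hp]; exact hd
  rcases Nat.lt_or_ge (degreeOf p.1) a with h | h
  · rw [hf _ h, zero_mul]
  · rw [hg _ (by omega), mul_zero]

lemma OG_zc {G : MvPowerSeries (Fin n) ℂ} (h : constantCoeff G = 0) : OG G 1 := by
  intro d hd
  have : d = 0 := deg_eq_zero (by omega)
  subst this; exact h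

lemma OG_pow {f : MvPowerSeries (Fin n) ℂ} {a : ℕ} (hf : OG f a) (m : ℕ) :
    OG (f ^ m) (a * m) := by
  induction m with
  | zero => intro d hd; simp at hd
  | succ m ih =>
      rw [pow_succ, Nat.mul_succ]
      exact OG_mul ih hf

lemma OG_prod_pow {G : FormalMap n} (hG : ∀ i, constantCoeff (G i) = 0)
    (e : Fin n →₀ ℕ) : OG (∏ i, G i ^ e i) (degreeOf e) := by
  rw [deg_eq_sum]
  classical
  have : ∀ (s : Finset (Fin n)), OG (∏ i ∈ s, G i ^ e i) (∑ i ∈ s, e i) := by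
    intro s
    induction s using Finset.induction with
    | empty => intro d hd; simp at hd
    | insert _ _ hx ih =>
        rw [Finset.prod_insert hx, Finset.sum_insert hx]
        exact OG_mul (by simpa using OG_pow (OG_zc (hG _)) _) ih
  exact this univ

lemma coeff_substM (G : FormalMap n) (f : MvPowerSeries (Fin n) ℂ) (d : Fin n →₀ ℕ) :
    coeff d (substM G f) =
      ∑ e ∈ Finset.Iic (Finsupp.equivFunOnFinite.symm fun _ => degreeOf d),
        coeff e f * coeff d (∏ i, G i ^ e i) := rfl

/-- Key extension lemma: the truncated sum can be replaced by any index set containing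
all `e` with `degreeOf e ≤ degreeOf d`. -/
lemma coeff_substM_eq (G : FormalMap n) (hG : ∀ i, constantCoeff (G i) = 0)
    (f : MvPowerSeries (Fin n) ℂ) (d : Fin n →₀ ℕ) (S : Finset (Fin n →₀ ℕ))
    (hS : ∀ e : Fin n →₀ ℕ, degreeOf e ≤ degreeOf d → e ∈ S) :
    coeff d (substM G f) = ∑ e ∈ S, coeff e f * coeff d (∏ i, G i ^ e i) := by
  classical
  rw [coeff_substM]
  set T := Finset.Iic (Finsupp.equivFunOnFinite.symm (fun _ => degreeOf d : Fin n → ℕ)) with hT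
  have hvan : ∀ e : Fin n →₀ ℕ, degreeOf d < degreeOf e →
      coeff e f * coeff d (∏ i, G i ^ e i) = 0 := fun e he => by
    rw [OG_prod_pow hG e d he, mul_zero]
  have h1 : ∑ e ∈ T, coeff e f * coeff d (∏ i, G i ^ e i)
      = ∑ e ∈ T ∩ S, coeff e f * coeff d (∏ i, G i ^ e i) := by
    refine (Finset.sum_subset Finset.inter_subset_left fun e heT heTS => ?_).symm
    apply hvan
    by_contra hc
    exact heTS (Finset.mem_inter.2 ⟨heT, hS e (by omega)⟩)
  have h2 : ∑ e ∈ S, coeff e f * coeff d (∏ i, G i ^ e i)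
      = ∑ e ∈ T ∩ S, coeff e f * coeff d (∏ i, G i ^ e i) := by
    refine (Finset.sum_subset Finset.inter_subset_right fun e heS heTS => ?_).symm
    apply hvan
    by_contra hc
    refine heTS (Finset.mem_inter.2 ⟨?_, heS⟩)
    rw [hT, Finset.mem_Iic]
    intro i
    exact le_trans (apply_le_deg e i) (le_of_not_gt hc)
  rw [h1, h2]

end Aux

namespace Aux

open MvPowerSeries Finset

variable {n : ℕ}

abbrev Zc (G : FormalMap n) : Prop := ∀ i, constantCoeff (G i) = 0

lemma substM_add (G : FormalMap n) (f g : MvPowerSeries (Fin n) ℂ) :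
    substM G (f + g) = substM G f + substM G g := by
  ext d
  show coeff d _ = coeff d (_ + _)
  rw [map_add, coeff_substM, coeff_substM, coeff_substM, ← Finset.sum_add_distrib]
  exact Finset.sum_congr rfl fun e _ => by rw [map_add, add_mul]

lemma substM_smul (G : FormalMap n) (c : ℂ) (f : MvPowerSeries (Fin n) ℂ) :
    substM G (c • f) = c • substM G f := by
  ext d
  show coeff d _ = coeff d (c • _)
  rw [coeff_smul, coeff_substM, coeff_substM, Finset.mul_sum]
  exact Finset.sum_congr rfl fun e _ => by rw [coeff_smul]; ring

lemma substM_sum (G : FormalMap n) {ι : Type*} (s : Finset ι)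
    (f : ι → MvPowerSeries (Fin n) ℂ) :
    substM G (∑ m ∈ s, f m) = ∑ m ∈ s, substM G (f m) := by
  classical
  induction s using Finset.induction with
  | empty =>
      ext d
      show coeff d (substM G 0) = coeff d 0
      rw [coeff_substM]
      simp
  | insert _ _ hx ih => rw [Finset.sum_insert hx, substM_add, ih, Finset.sum_insert hx]

lemma substM_one (G : FormalMap n) : substM G (1 : MvPowerSeries (Fin n) ℂ) = 1 := by
  ext d
  show coeff d _ = coeff d 1
  rw [coeff_substM, Finset.sum_eq_single (0 : Fin n →₀ ℕ)]
  · simp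
  · intro e _ he; rw [coeff_one, if_neg he, zero_mul]
  · intro h
    exact absurd (Finset.mem_Iic.2 (by intro i; simp)) h

lemma prod_pow_single (G : FormalMap n) (l : Fin n) :
    (∏ i, G i ^ (Finsupp.single l 1) i) = G l := by
  rw [Finset.prod_eq_single l]
  · simp
  · intro i _ hi; rw [Finsupp.single_apply, if_neg (Ne.symm hi), pow_zero]
  · intro h; exact absurd (Finset.mem_univ l) h

lemma substM_X (G : FormalMap n) (j : Fin n)
    (hGj : constantCoeff (G j) = 0) :
    substM G (X j : MvPowerSeries (Fin n) ℂ) = G j := by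
  ext d
  show coeff d _ = coeff d (G j)
  rw [coeff_substM]
  rcases eq_or_ne d 0 with rfl | hd
  · rw [Finset.sum_eq_zero, (show coeff (0 : Fin n →₀ ℕ) (G j) = 0 from hGj)]
    intro e he
    rw [Finset.mem_Iic] at he
    have : e = 0 := by
      have hF : (Finsupp.equivFunOnFinite.symm fun _ => degreeOf (0 : Fin n →₀ ℕ)) = (0 : Fin n →₀ ℕ) := by
        ext i; simp [deg_zero]
      rw [hF] at he
      exact le_antisymm he zero_le
    subst this
    rw [X, coeff_monomial, if_neg (fun hc => one_ne_zero (Finsupp.single_eq_zero.mp hc.symm)), zero_mul]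
  · have hd1 : 1 ≤ degreeOf d := by
      rcases Nat.eq_zero_or_pos (degreeOf d) with h | h
      · exact absurd (deg_eq_zero h) hd
      · exact h
    rw [Finset.sum_eq_single (Finsupp.single j 1)]
    · rw [X, coeff_monomial, if_pos rfl, one_mul, prod_pow_single]
    · intro e _ he; rw [X, coeff_monomial, if_neg he, zero_mul]
    · intro h
      refine absurd (Finset.mem_Iic.2 ?_) h
      intro i
      calc (Finsupp.single j 1) i ≤ 1 := by rw [Finsupp.single_apply]; split <;> omega
        _ ≤ degreeOf d := hd1

lemma prod_pow_add (G : FormalMap n) (a b : Fin n →₀ ℕ) :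
    (∏ i, G i ^ (a + b) i) = (∏ i, G i ^ a i) * (∏ i, G i ^ b i) := by
  rw [← Finset.prod_mul_distrib]
  exact Finset.prod_congr rfl fun i _ => by rw [Finsupp.add_apply, pow_add]

/-- the big index set -/
def E (n : ℕ) (D : ℕ) : Finset (Fin n →₀ ℕ) :=
  Finset.Iic (Finsupp.equivFunOnFinite.symm (fun _ => D : Fin n → ℕ))

lemma mem_E {D : ℕ} {e : Fin n →₀ ℕ} (h : degreeOf e ≤ D) : e ∈ E n D :=
  Finset.mem_Iic.2 fun i => le_trans (apply_le_deg e i) h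

lemma mem_E_iff {D : ℕ} {e : Fin n →₀ ℕ} : e ∈ E n D ↔ ∀ i, e i ≤ D := by
  rw [E, Finset.mem_Iic]; exact Iff.rfl

lemma substM_mul (G : FormalMap n) (hG : Zc G) (f g : MvPowerSeries (Fin n) ℂ) :
    substM G (f * g) = substM G f * substM G g := by
  classical
  ext d
  show coeff d _ = coeff d _
  set D := degreeOf d with hD
  set t : (Fin n →₀ ℕ) × (Fin n →₀ ℕ) → ℂ := fun q =>
    (coeff q.1 f * coeff q.2 g) * coeff d (∏ i, G i ^ (q.1 + q.2) i) with ht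
  have tvan : ∀ q : (Fin n →₀ ℕ) × (Fin n →₀ ℕ), q ∉ E n D ×ˢ E n D → t q = 0 := by
    intro q hq
    rw [Finset.mem_product, not_and_or] at hq
    have : ∃ i : Fin n, D < (q.1 + q.2) i := by
      rcases hq with h | h <;> rw [mem_E_iff] at h <;> push_neg at h <;>
        obtain ⟨i, hi⟩ := h <;> exact ⟨i, by have := Finsupp.add_apply q.1 q.2 i; omega⟩
    obtain ⟨i, hi⟩ := this
    have : degreeOf d < degreeOf (q.1 + q.2) := lt_of_lt_of_le hi (apply_le_deg _ i)
    rw [ht]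
    simp only
    rw [OG_prod_pow hG _ d this, mul_zero]
  -- RHS
  have hR : coeff d (substM G f * substM G g) = ∑ e1 ∈ E n D, ∑ e2 ∈ E n D, t (e1, e2) := by
    rw [coeff_mul]
    have step : ∀ p ∈ Finset.HasAntidiagonal.antidiagonal d,
        coeff p.1 (substM G f) * coeff p.2 (substM G g) =
        ∑ e1 ∈ E n D, ∑ e2 ∈ E n D, (coeff e1 f * coeff e2 g) *
          (coeff p.1 (∏ i, G i ^ e1 i) * coeff p.2 (∏ i, G i ^ e2 i)) := by
      intro p hp
      rw [Finset.HasAntidiagonal.mem_antidiagonal] at hp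
      have hp1 : degreeOf p.1 ≤ D := by rw [hD, ← hp, deg_add]; omega
      have hp2 : degreeOf p.2 ≤ D := by rw [hD, ← hp, deg_add]; omega
      rw [coeff_substM_eq G hG f p.1 (E n D) (fun e he => mem_E (le_trans he hp1)),
          coeff_substM_eq G hG g p.2 (E n D) (fun e he => mem_E (le_trans he hp2)),
          Finset.sum_mul_sum]
      exact Finset.sum_congr rfl fun e1 _ => Finset.sum_congr rfl fun e2 _ => by ring
    rw [Finset.sum_congr rfl step, Finset.sum_comm]
    refine Finset.sum_congr rfl fun e1 _ => ?_
    rw [Finset.sum_comm]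
    refine Finset.sum_congr rfl fun e2 _ => ?_
    rw [← Finset.mul_sum, ht]
    simp only
    rw [prod_pow_add, coeff_mul]
  -- LHS
  have hL : coeff d (substM G (f * g)) = ∑ e1 ∈ E n D, ∑ e2 ∈ E n D, t (e1, e2) := by
    rw [coeff_substM_eq G hG (f * g) d (E n (2 * D))
      (fun e he => mem_E (by omega : degreeOf e ≤ 2 * D))]
    have step : ∀ e ∈ E n (2 * D),
        coeff e (f * g) * coeff d (∏ i, G i ^ e i) =
        ∑ q ∈ Finset.HasAntidiagonal.antidiagonal e, t q := by
      intro e _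
      rw [coeff_mul, Finset.sum_mul]
      refine Finset.sum_congr rfl fun q hq => ?_
      rw [Finset.HasAntidiagonal.mem_antidiagonal] at hq
      rw [ht]; simp only [hq]
    rw [Finset.sum_congr rfl step, ← Finset.sum_biUnion]
    · have hsub : E n D ×ˢ E n D ⊆ (E n (2 * D)).biUnion (fun e => Finset.HasAntidiagonal.antidiagonal e) := by
        intro q hq
        rw [Finset.mem_product, mem_E_iff, mem_E_iff] at hq
        refine Finset.mem_biUnion.2 ⟨q.1 + q.2, ?_, Finset.HasAntidiagonal.mem_antidiagonal.2 rfl⟩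
        rw [mem_E_iff]
        intro i
        have := Finsupp.add_apply q.1 q.2 i
        have h1 := hq.1 i
        have h2 := hq.2 i
        omega
      rw [← Finset.sum_subset hsub (fun q _ hq => tvan q hq), Finset.sum_product]
    · intro a _ b _ hab
      simp only [Function.onFun]
      rw [Finset.disjoint_left]
      intro q hqa hqb
      rw [Finset.HasAntidiagonal.mem_antidiagonal] at hqa hqb
      exact hab (hqa ▸ hqb)
  rw [hL, hR]

/-- `substM G` as a ring hom, when `G` has zero constant terms. -/
def substHom (G : FormalMap n) (hG : Zc G) :
    MvPowerSeries (Fin n) ℂ →+* MvPowerSeries (Fin n) ℂ where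
  toFun := substM G
  map_one' := substM_one G
  map_mul' := substM_mul G hG
  map_zero' := by
    have := substM_sum G (∅ : Finset ℕ) (fun _ => (0 : MvPowerSeries (Fin n) ℂ))
    simpa using this
  map_add' := substM_add G

lemma substM_prod_pow (G : FormalMap n) (hG : Zc G) (F : FormalMap n) (e : Fin n →₀ ℕ) :
    substM G (∏ i, F i ^ e i) = ∏ i, (substM G (F i)) ^ e i := by
  have := map_prod (substHom G hG) (fun i => F i ^ e i) Finset.univ
  simp only [substHom, RingHom.coe_mk, MonoidHom.coe_mk, OneHom.coe_mk] at this
  rw [this]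
  exact Finset.prod_congr rfl fun i _ => map_pow (substHom G hG) (F i) (e i)

lemma constantCoeff_substM (G : FormalMap n) (f : MvPowerSeries (Fin n) ℂ) :
    constantCoeff (substM G f) = constantCoeff f := by
  have h : constantCoeff (substM G f) = coeff 0 (substM G f) := rfl
  rw [h, coeff_substM, Finset.sum_eq_single (0 : Fin n →₀ ℕ)]
  · simp [coeff_zero_eq_constantCoeff]
  · intro e he hne
    rw [Finset.mem_Iic] at he
    have hF : (Finsupp.equivFunOnFinite.symm fun _ => degreeOf (0 : Fin n →₀ ℕ)) = (0 : Fin n →₀ ℕ) := by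
      ext i; simp [deg_zero]
    rw [hF] at he
    exact absurd (le_antisymm he zero_le) hne
  · intro h0
    refine absurd (Finset.mem_Iic.2 ?_) h0
    intro i; simp

/-- Associativity of substitution. -/
lemma substM_substM (G H : FormalMap n) (hG : Zc G) (hH : Zc H)
    (f : MvPowerSeries (Fin n) ℂ) :
    substM H (substM G f) = substM (fun i => substM H (G i)) f := by
  classical
  ext d
  show coeff d _ = coeff d _
  set D := degreeOf d with hD
  set K : FormalMap n := fun i => substM H (G i) with hK
  have hZK : Zc K := fun i => by rw [hK]; simp only; rw [constantCoeff_substM]; exact hG i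
  set Ebig := E n (n * D + D) with hEbig
  have hL : coeff d (substM H (substM G f)) =
      ∑ e ∈ Ebig, coeff e f * coeff d (∏ i, K i ^ e i) := by
    rw [coeff_substM_eq H hH (substM G f) d (E n D) (fun e he => mem_E he)]
    have step : ∀ e' ∈ E n D,
        coeff e' (substM G f) * coeff d (∏ i, H i ^ e' i) =
        ∑ e ∈ Ebig, coeff e f * (coeff e' (∏ i, G i ^ e i) * coeff d (∏ i, H i ^ e' i)) := by
      intro e' he'
      have hdeg : degreeOf e' ≤ n * D := by
        rw [deg_eq_sum]
        calc (∑ i, e' i) ≤ ∑ _i : Fin n, D :=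
              Finset.sum_le_sum fun i _ => mem_E_iff.1 he' i
          _ = n * D := by simp [Finset.sum_const, mul_comm]
      rw [coeff_substM_eq G hG f e' Ebig
        (fun e he => mem_E (by omega : degreeOf e ≤ n * D + D)), Finset.sum_mul]
      exact Finset.sum_congr rfl fun e _ => by ring
    rw [Finset.sum_congr rfl step, Finset.sum_comm]
    refine Finset.sum_congr rfl fun e _ => ?_
    rw [← Finset.mul_sum]
    congr 1
    have : ∑ e' ∈ E n D, coeff e' (∏ i, G i ^ e i) * coeff d (∏ i, H i ^ e' i) =
        coeff d (substM H (∏ i, G i ^ e i)) := by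
      rw [coeff_substM_eq H hH _ d (E n D) (fun e'' he'' => mem_E he'')]
    rw [this, substM_prod_pow H hH G e]
  have hR : coeff d (substM K f) =
      ∑ e ∈ Ebig, coeff e f * coeff d (∏ i, K i ^ e i) :=
    coeff_substM_eq K hZK f d Ebig (fun e he => mem_E (by omega : degreeOf e ≤ n * D + D))
  rw [hL]; exact hR.symm

lemma prod_X_pow (e : Fin n →₀ ℕ) :
    (∏ i, (X i : MvPowerSeries (Fin n) ℂ) ^ e i) = monomial e 1 := by
  classical
  have h1 : ∀ i : Fin n, (X i : MvPowerSeries (Fin n) ℂ) ^ e i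
      = monomial (Finsupp.single i (e i)) 1 := fun i => X_pow_eq i (e i)
  rw [Finset.prod_congr rfl fun i _ => h1 i]
  have h2 : ∀ (s : Finset (Fin n)),
      (∏ i ∈ s, (monomial (Finsupp.single i (e i)) 1 : MvPowerSeries (Fin n) ℂ))
        = monomial (∑ i ∈ s, Finsupp.single i (e i)) 1 := by
    intro s
    induction s using Finset.induction with
    | empty => simp
    | insert _ _ hx ih =>
        rw [Finset.prod_insert hx, Finset.sum_insert hx, ih, monomial_mul_monomial, one_mul]
  have hsum : (∑ i : Fin n, Finsupp.single i (e i)) = e := by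
    ext i
    rw [Finset.sum_apply']
    simp [Finsupp.single_apply]
  rw [h2 Finset.univ, hsum]

lemma substM_idM (f : MvPowerSeries (Fin n) ℂ) : substM (fun i => X i : FormalMap n) f = f := by
  ext d
  show coeff d _ = coeff d f
  rw [coeff_substM, Finset.sum_eq_single d]
  · rw [prod_X_pow, coeff_monomial, if_pos rfl, mul_one]
  · intro e _ hne
    rw [prod_X_pow, coeff_monomial, if_neg (Ne.symm hne), mul_zero]
  · intro hd
    exact absurd (Finset.mem_Iic.2 fun i => apply_le_deg d i) hd

lemma deg_one_single {e : Fin n →₀ ℕ} (h : degreeOf e = 1) :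
    ∃ l : Fin n, e = Finsupp.single l 1 := by
  classical
  have hsum : ∑ i, e i = 1 := by rw [← deg_eq_sum, h]
  have hex : ∃ l : Fin n, e l ≠ 0 := by
    by_contra hc
    push_neg at hc
    rw [Finset.sum_eq_zero (fun i _ => hc i)] at hsum
    omega
  obtain ⟨l, hl⟩ := hex
  have hrest : ∑ i ∈ Finset.univ.erase l, e i = 1 - e l := by
    have := Finset.add_sum_erase Finset.univ e (Finset.mem_univ l)
    omega
  have hel : e l = 1 := by
    have h1 : e l ≤ ∑ i, e i :=
      Finset.single_le_sum (fun i _ => Nat.zero_le (e i)) (Finset.mem_univ l)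
    omega
  refine ⟨l, ?_⟩
  ext i
  rcases eq_or_ne i l with rfl | hne
  · rw [hel, Finsupp.single_apply, if_pos rfl]
  · rw [Finsupp.single_apply, if_neg (Ne.symm hne)]
    have h0 : ∑ i ∈ Finset.univ.erase l, e i = 0 := by omega
    exact (Finset.sum_eq_zero_iff.1 h0) i (Finset.mem_erase.2 ⟨hne, Finset.mem_univ i⟩)

/-- the linear part of a substitution multiplies -/
lemma coeff_single_substM (G : FormalMap n) (hG : Zc G) (f : MvPowerSeries (Fin n) ℂ)
    (j : Fin n) :
    coeff (Finsupp.single j 1) (substM G f) =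
      ∑ l, coeff (Finsupp.single l 1) f * coeff (Finsupp.single j 1) (G l) := by
  classical
  set S : Finset (Fin n →₀ ℕ) :=
    insert 0 (Finset.image (fun l : Fin n => Finsupp.single l 1) Finset.univ) with hS
  have h0S : (0 : Fin n →₀ ℕ) ∉ Finset.image (fun l : Fin n => Finsupp.single l 1) Finset.univ := by
    rw [Finset.mem_image]
    rintro ⟨l, -, hl⟩
    exact (one_ne_zero : (1:ℕ) ≠ 0) (Finsupp.single_eq_zero.mp hl)
  rw [coeff_substM_eq G hG f (Finsupp.single j 1) S ?memS]
  case memS =>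
    intro e he
    rw [deg_single] at he
    rcases Nat.le_one_iff_eq_zero_or_eq_one.mp he with h | h
    · rw [hS]; exact Finset.mem_insert.2 (Or.inl (deg_eq_zero h))
    · obtain ⟨l, rfl⟩ := deg_one_single h
      rw [hS]
      exact Finset.mem_insert.2 (Or.inr (Finset.mem_image.2 ⟨l, Finset.mem_univ l, rfl⟩))
  rw [hS, Finset.sum_insert h0S]
  have hz : coeff (Finsupp.single j 1) (∏ i, G i ^ (0 : Fin n →₀ ℕ) i) = 0 := by
    simp only [Finsupp.coe_zero, Pi.zero_apply, pow_zero, Finset.prod_const_one]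
    rw [coeff_one, if_neg (fun hc => one_ne_zero (Finsupp.single_eq_zero.mp hc))]
  rw [hz, mul_zero, zero_add,
    Finset.sum_image (fun a _ b _ h => Finsupp.single_left_injective one_ne_zero h)]
  exact Finset.sum_congr rfl fun l _ => by rw [prod_pow_single]

end Aux

namespace Aux

open MvPowerSeries Finset

variable {n : ℕ}

def linOf (B : Matrix (Fin n) (Fin n) ℂ) : FormalMap n :=
  fun i => ∑ j, MvPowerSeries.C (B i j) * MvPowerSeries.X j

lemma linMap_eq (F : FormalMap n) : linMap F = linOf (linMatrix F) := rfl

lemma constantCoeff_compM (F G : FormalMap n) (i : Fin n) :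
    constantCoeff (compM F G i) = constantCoeff (F i) :=
  constantCoeff_substM G (F i)

lemma Zc_compM {F : FormalMap n} (G : FormalMap n) (hF : Zc F) : Zc (compM F G) :=
  fun i => by rw [constantCoeff_compM]; exact hF i

lemma Zc_idM : Zc (idM n) := fun i => constantCoeff_X i

lemma Zc_iterM {F : FormalMap n} (hF : Zc F) (m : ℕ) : Zc (iterM F m) := by
  induction m with
  | zero => exact Zc_idM
  | succ m ih => exact Zc_compM _ hF

lemma Zc_linOf (B : Matrix (Fin n) (Fin n) ℂ) : Zc (linOf B) := by
  intro i
  rw [linOf, map_sum]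
  refine Finset.sum_eq_zero fun j _ => ?_
  rw [map_mul, constantCoeff_X, mul_zero]

lemma compM_assoc (F G H : FormalMap n) (hG : Zc G) (hH : Zc H) :
    compM (compM F G) H = compM F (compM G H) :=
  funext fun i => substM_substM G H hG hH (F i)

lemma compM_idM (F : FormalMap n) : compM F (idM n) = F :=
  funext fun i => substM_idM (F i)

lemma idM_compM {F : FormalMap n} (hF : Zc F) : compM (idM n) F = F :=
  funext fun i => substM_X F i (hF i)

lemma compM_smul_left (c : ℂ) (F G : FormalMap n) :
    compM (c • F) G = c • compM F G :=
  funext fun i => substM_smul G c (F i)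

lemma compM_sum_left {ι : Type*} (s : Finset ι) (F : ι → FormalMap n) (G : FormalMap n) :
    compM (∑ j ∈ s, F j) G = ∑ j ∈ s, compM (F j) G := by
  funext i
  rw [Finset.sum_apply]
  show substM G ((∑ j ∈ s, F j) i) = _
  rw [Finset.sum_apply]
  exact substM_sum G s fun j => F j i

lemma compM_linOf (B : Matrix (Fin n) (Fin n) ℂ) {G : FormalMap n} (hG : Zc G) :
    compM (linOf B) G = fun i => ∑ j, B i j • G j := by
  funext i
  show substM G (∑ j, MvPowerSeries.C (B i j) * MvPowerSeries.X j) = _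
  rw [substM_sum]
  refine Finset.sum_congr rfl fun j _ => ?_
  rw [← smul_eq_C_mul, substM_smul, substM_X G j (hG j)]

lemma linOf_mul (A B : Matrix (Fin n) (Fin n) ℂ) :
    compM (linOf A) (linOf B) = linOf (A * B) := by
  rw [compM_linOf A (Zc_linOf B)]
  funext i
  rw [linOf]
  simp only [linOf, Finset.smul_sum, ← smul_eq_C_mul, smul_smul]
  rw [Finset.sum_comm]
  refine Finset.sum_congr rfl fun l _ => ?_
  rw [← Finset.sum_smul, Matrix.mul_apply]

lemma linOf_one : linOf (1 : Matrix (Fin n) (Fin n) ℂ) = idM n := by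
  funext i
  rw [linOf, idM]
  rw [Finset.sum_eq_single i]
  · rw [Matrix.one_apply_eq, map_one, one_mul]
  · intro j _ hj
    rw [Matrix.one_apply_ne (Ne.symm hj), map_zero, zero_mul]
  · intro h; exact absurd (Finset.mem_univ i) h

lemma linMatrix_compM (F : FormalMap n) {G : FormalMap n} (hG : Zc G) :
    linMatrix (compM F G) = linMatrix F * linMatrix G := by
  funext i j
  rw [Matrix.mul_apply]
  exact coeff_single_substM G hG (F i) j

lemma linMatrix_idM : linMatrix (idM n) = 1 := by
  funext i j
  rw [linMatrix, idM, X, coeff_monomial]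
  rw [Matrix.one_apply]
  by_cases h : i = j
  · rw [if_pos (by rw [h]), if_pos h]
  · rw [if_neg (fun hc => h (Finsupp.single_left_injective one_ne_zero hc).symm), if_neg h]

lemma linMatrix_iterM {Θ : FormalMap n} (hΘ : Zc Θ) (m : ℕ) :
    linMatrix (iterM Θ m) = linMatrix Θ ^ m := by
  induction m with
  | zero => rw [iterM, pow_zero, linMatrix_idM]
  | succ m ih =>
      show linMatrix (compM Θ (iterM Θ m)) = _
      rw [linMatrix_compM Θ (Zc_iterM hΘ m), ih, pow_succ']

lemma iter_commute {Θ : FormalMap n} (hΘ : Zc Θ) (m : ℕ) :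
    compM (iterM Θ m) Θ = iterM Θ (m + 1) := by
  induction m with
  | zero =>
      show compM (idM n) Θ = compM Θ (idM n)
      rw [idM_compM hΘ, compM_idM]
  | succ m ih =>
      show compM (compM Θ (iterM Θ m)) Θ = _
      rw [compM_assoc Θ (iterM Θ m) Θ (Zc_iterM hΘ m) hΘ, ih]
      rfl

lemma Zc_smul_sum {ι : Type*} (s : Finset ι) (g : ι → FormalMap n)
    (hg : ∀ j ∈ s, Zc (g j)) (c : ℂ) : Zc (c • ∑ j ∈ s, g j) := by
  intro i
  rw [Pi.smul_apply, Finset.sum_apply]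
  show coeff (0 : Fin n →₀ ℕ) (c • ∑ j ∈ s, g j i) = 0
  have h0 : ∀ j ∈ s, coeff (0 : Fin n →₀ ℕ) (g j i) = 0 := fun j hj => hg j hj i
  rw [coeff_smul, map_sum, Finset.sum_eq_zero h0, mul_zero]

lemma compM_linOf_smul_sum (B : Matrix (Fin n) (Fin n) ℂ) {ι : Type*} (s : Finset ι)
    (g : ι → FormalMap n) (hg : ∀ j ∈ s, Zc (g j)) (c : ℂ) :
    compM (linOf B) (c • ∑ j ∈ s, g j) = c • ∑ j ∈ s, compM (linOf B) (g j) := by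
  rw [compM_linOf B (Zc_smul_sum s g hg c)]
  funext i
  rw [Pi.smul_apply, Finset.sum_apply]
  have step : ∀ l : Fin n, B i l • (c • ∑ j ∈ s, g j) l
      = c • ∑ j ∈ s, B i l • g j l := by
    intro l
    rw [Pi.smul_apply, Finset.sum_apply, smul_comm, Finset.smul_sum]
  rw [Finset.sum_congr rfl fun l _ => step l, ← Finset.smul_sum]
  congr 1
  rw [Finset.sum_comm]
  refine Finset.sum_congr rfl fun j hj => ?_
  rw [compM_linOf B (hg j hj)]

end Aux


open Aux in
theorem averaging_aux {n : ℕ} (k : ℕ) (hk : 0 < k)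
    (Θ T Tinv : FormalMap n)
    (hΘ0 : ∀ i, MvPowerSeries.constantCoeff (Θ i) = 0)
    (hΘk : iterM Θ k = idM n)
    (hT : T = linMap Θ)
    (hTinv : compM T Tinv = idM n) (hTinv' : compM Tinv T = idM n) :
    compM Tinv
        (compM (((k : ℂ)⁻¹) • ∑ j ∈ Finset.range k, compM (iterM Tinv j) (iterM Θ j)) Θ) =
      ((k : ℂ)⁻¹) • ∑ j ∈ Finset.range k, compM (iterM Tinv j) (iterM Θ j) := by
  classical
  have hZΘ : Zc Θ := hΘ0
  -- matrices
  set A := linMatrix Θ with hA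
  have hAk : A ^ k = 1 := by rw [hA, ← linMatrix_iterM hZΘ k, hΘk, linMatrix_idM]
  set B := A ^ (k - 1) with hB
  have hAB : A * B = 1 := by
    rw [hB, ← pow_succ', Nat.sub_add_cancel hk, hAk]
  have hBA : B * A = 1 := by
    rw [hB, ← pow_succ, Nat.sub_add_cancel hk, hAk]
  have hTeq : T = linOf A := hT
  have hZT : Zc T := by rw [hTeq]; exact Zc_linOf A
  have hZTinv : Zc Tinv := by
    intro i
    have h1 : MvPowerSeries.constantCoeff (compM Tinv T i)
        = MvPowerSeries.constantCoeff (Tinv i) :=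
      constantCoeff_compM Tinv T i
    rw [hTinv'] at h1
    rw [← h1]
    exact Zc_idM i
  have hTinvEq : Tinv = linOf B := by
    have h1 : compM (linOf B) (compM T Tinv) = linOf B := by rw [hTinv, compM_idM]
    have h2 : compM (linOf B) (compM T Tinv) = compM (compM (linOf B) T) Tinv :=
      (compM_assoc (linOf B) T Tinv hZT hZTinv).symm
    have h3 : compM (linOf B) T = idM n := by
      rw [hTeq, linOf_mul, hBA, linOf_one]
    rw [h2, h3, idM_compM hZTinv] at h1
    exact h1
  have hIterTinv : ∀ m, iterM Tinv m = linOf (B ^ m) := by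
    intro m
    induction m with
    | zero => rw [iterM, pow_zero, linOf_one]
    | succ m ih =>
        show compM Tinv (iterM Tinv m) = _
        rw [ih, hTinvEq, linOf_mul, ← pow_succ']
  have hBk : B ^ k = 1 := by
    rw [hB, ← pow_mul, mul_comm, pow_mul, hAk, one_pow]
  have hTinvK : iterM Tinv k = idM n := by rw [hIterTinv k, hBk, linOf_one]
  -- the summands
  set f : ℕ → FormalMap n := fun j => compM (iterM Tinv j) (iterM Θ j) with hf
  have hZf : ∀ j, Zc (f j) := fun j => Zc_compM _ (Zc_iterM hZTinv j)
  set g : ℕ → FormalMap n := fun j => compM (iterM Tinv j) (iterM Θ (j + 1)) with hg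
  have hZg : ∀ j, Zc (g j) := fun j => Zc_compM _ (Zc_iterM hZTinv j)
  set c : ℂ := (k : ℂ)⁻¹ with hc
  -- step A+B : compM H Θ = c • ∑ g j
  have hstepAB : compM (c • ∑ j ∈ Finset.range k, f j) Θ = c • ∑ j ∈ Finset.range k, g j := by
    rw [compM_smul_left, compM_sum_left]
    congr 1
    refine Finset.sum_congr rfl fun j _ => ?_
    rw [hf, hg]
    simp only
    rw [compM_assoc (iterM Tinv j) (iterM Θ j) Θ (Zc_iterM hZΘ j) hZΘ, iter_commute hZΘ j]
  -- step C+D : compM Tinv (c • ∑ g j) = c • ∑ f (j+1)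
  have hstepCD : compM Tinv (c • ∑ j ∈ Finset.range k, g j)
      = c • ∑ j ∈ Finset.range k, f (j + 1) := by
    rw [hTinvEq, compM_linOf_smul_sum B (Finset.range k) g (fun j _ => hZg j) c]
    congr 1
    refine Finset.sum_congr rfl fun j _ => ?_
    rw [← hTinvEq]
    show compM Tinv (compM (iterM Tinv j) (iterM Θ (j + 1))) = f (j + 1)
    rw [← compM_assoc Tinv (iterM Tinv j) (iterM Θ (j + 1)) (Zc_iterM hZTinv j)
      (Zc_iterM hZΘ (j + 1))]
    rfl
  -- step E : reindex
  have hf0 : f 0 = idM n := compM_idM (idM n)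
  have hfk : f k = idM n := by
    rw [hf]
    simp only
    rw [hΘk, compM_idM, hTinvK]
  have hstepE : ∑ j ∈ Finset.range k, f (j + 1) = ∑ j ∈ Finset.range k, f j := by
    have h1 := Finset.sum_range_succ' f k
    have h2 := Finset.sum_range_succ f k
    rw [h1, hf0, hfk] at h2
    exact add_right_cancel h2
  rw [hstepAB, hstepCD, hstepE]


/-- Let Θ be a formal power series self-map of ℂⁿ with Θ^k = id, belonging to a group S of
formal maps closed under taking linear parts and whose tangent-to-identity elements are
closed under convex combinations.  With T = L(Θ) the linear part, the averaged element
H = (1/k)(id + T⁻¹Θ + ⋯ + T^(1-k)Θ^(k-1)) satisfies T⁻¹ ∘ H ∘ Θ = H, i.e. H conjugates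
T to Θ. -/
theorem averaging_conjugates_linear_part {n : ℕ} (k : ℕ) (hk : 0 < k)
    (Θ T Tinv : FormalMap n)
    (hΘ0 : ∀ i, MvPowerSeries.constantCoeff (Θ i) = 0)
    (hΘk : iterM Θ k = idM n)
    (hT : T = linMap Θ)
    (hTinv : compM T Tinv = idM n) (hTinv' : compM Tinv T = idM n)
    (S : Set (FormalMap n)) (hΘS : Θ ∈ S)
    (hSlin : ∀ F ∈ S, linMap F ∈ S)
    (hSconv : ∀ F₁ ∈ S, ∀ F₂ ∈ S, linMap F₁ = idM n → linMap F₂ = idM n →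
      ∀ a : ℝ, 0 < a → a < 1 → (((a : ℂ) • F₁ + ((1 : ℂ) - (a : ℂ)) • F₂) ∈ S)) :
    compM Tinv
        (compM (((k : ℂ)⁻¹) • ∑ j ∈ Finset.range k, compM (iterM Tinv j) (iterM Θ j)) Θ) =
      ((k : ℂ)⁻¹) • ∑ j ∈ Finset.range k, compM (iterM Tinv j) (iterM Θ j) :=
  averaging_aux k hk Θ T Tinv hΘ0 hΘk hT hTinv hTinv'

end
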